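/- Let s ≥ 2 be an even natural number. Then for all natural numbers 0 ≤ r ≤ s and all real x with |x| ≥ 1, we have 0 ≤ G_{r,s}(x) ≤ min(|x|^s, (2|x|)^r). -/
import Mathlib


/-- Φ_t, the Chebyshev polynomial of the first kind over ℝ (indexed by ℤ,
with Φ_{-t} = Φ_t): Φ_0(x)=1, Φ_1(x)=x, Φ_{t+1}(x)=2x·Φ_t(x)−Φ_{t−1}(x). -/
noncomputable def Phi (t : ℤ) : Polynomial ℝ := Polynomial.Chebyshev.T ℝ t

/-- G_{r,s}(x) = E_{t∼D_s}[Φ_t(x)·1{|t| ≤ r}]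
  = 2^{−s} ∑_{j=0}^{s} binom(s,j)·Φ_{2j−s}(x)·1{|2j−s| ≤ r}. -/
noncomputable def G (r s : ℕ) : Polynomial ℝ :=
  ((2 : ℝ) ^ s)⁻¹ • ∑ j ∈ Finset.range (s + 1),
    (s.choose j : ℝ) • (if |2 * (j : ℤ) - s| ≤ (r : ℤ) then Phi (2 * j - s) else 0)

open Polynomial Polynomial.Chebyshev Finset

lemma cheb_rec (t : ℤ) : Phi (t+1) + Phi (t-1) = 2 * X * Phi t := by
  have h := Polynomial.Chebyshev.T_add_two ℝ (t-1)
  rw [show t - 1 + 2 = t + 1 by ring, show t - 1 + 1 = t by ring] at h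
  unfold Phi
  linear_combination h

lemma cheb_mono (y : ℝ) (hy : 1 ≤ y) (n : ℕ) :
    1 ≤ (Polynomial.Chebyshev.T ℝ (n:ℤ)).eval y ∧
    (Polynomial.Chebyshev.T ℝ (n:ℤ)).eval y ≤ (Polynomial.Chebyshev.T ℝ ((n:ℤ)+1)).eval y := by
  induction n with
  | zero => simp [hy]
  | succ n ih =>
    have h := Polynomial.Chebyshev.T_add_two ℝ (n:ℤ)
    have he : (Polynomial.Chebyshev.T ℝ ((n:ℤ)+2)).eval y
        = 2 * y * (Polynomial.Chebyshev.T ℝ ((n:ℤ)+1)).eval y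
          - (Polynomial.Chebyshev.T ℝ (n:ℤ)).eval y := by
      rw [h]; simp
    obtain ⟨h1, h2⟩ := ih
    push_cast
    constructor
    · linarith
    · rw [show (n:ℤ) + 1 + 1 = (n:ℤ) + 2 by ring, he]
      nlinarith

lemma cheb_ge_one_int (y : ℝ) (hy : 1 ≤ y) (t : ℤ) :
    1 ≤ (Polynomial.Chebyshev.T ℝ t).eval y := by
  rcases Int.natAbs_eq t with h | h
  · rw [h]; exact (cheb_mono y hy t.natAbs).1
  · rw [h, Polynomial.Chebyshev.T_neg]; exact (cheb_mono y hy t.natAbs).1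

lemma cheb_le (y : ℝ) (hy : 1 ≤ y) (n : ℕ) :
    (Polynomial.Chebyshev.T ℝ (n:ℤ)).eval y ≤ (2*y)^n := by
  induction n with
  | zero => simp
  | succ n ih =>
    have h := Polynomial.Chebyshev.T_add_two ℝ ((n:ℤ)-1)
    rw [show (n:ℤ) - 1 + 2 = (n:ℤ) + 1 by ring, show (n:ℤ) - 1 + 1 = (n:ℤ) by ring] at h
    have he : (Polynomial.Chebyshev.T ℝ ((n:ℤ)+1)).eval y
        = 2 * y * (Polynomial.Chebyshev.T ℝ (n:ℤ)).eval y
          - (Polynomial.Chebyshev.T ℝ ((n:ℤ)-1)).eval y := by rw [h]; simp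
    have h1 := cheb_ge_one_int y hy ((n:ℤ)-1)
    have h2 := cheb_ge_one_int y hy (n:ℤ)
    push_cast
    rw [he, pow_succ]
    nlinarith

lemma sum_phi (s : ℕ) :
    ∑ j ∈ Finset.range (s+1), (s.choose j : ℝ) • Phi (2*(j:ℤ) - (s:ℤ)) = (2 * X)^s := by
  induction s with
  | zero => simp [Phi]
  | succ s ih =>
    set g : ℕ → Polynomial ℝ := fun j => (s.choose j : ℝ) • Phi (2*(j:ℤ) - (s:ℤ) - 1) with hg
    have hsplit : ∀ j ∈ Finset.range (s+1),
        ((s+1).choose (j+1) : ℝ) • Phi (2*((j+1:ℕ):ℤ) - ((s+1:ℕ):ℤ))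
          = (s.choose j : ℝ) • Phi (2*(j:ℤ) - (s:ℤ) + 1) + g (j+1) := by
      intro j _
      rw [hg]
      simp only [Nat.choose_succ_succ]
      push_cast
      rw [add_smul]
      congr 2
      · ring
      · ring
    rw [Finset.sum_range_succ', Finset.sum_congr rfl hsplit, Finset.sum_add_distrib]
    have hc : (((s+1).choose 0 : ℕ) : ℝ) • Phi (2*((0:ℕ):ℤ) - ((s+1:ℕ):ℤ)) = g 0 := by
      rw [hg]
      simp only [Nat.choose_zero_right]
      push_cast
      congr 1
      ring
    rw [hc, add_assoc, ← Finset.sum_range_succ' g (s+1)]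
    have htrunc : ∑ j ∈ Finset.range (s+2), g j = ∑ j ∈ Finset.range (s+1), g j := by
      rw [Finset.sum_range_succ, hg]
      simp
    rw [htrunc, ← Finset.sum_add_distrib]
    have hterm : ∀ j ∈ Finset.range (s+1),
        (s.choose j : ℝ) • Phi (2*(j:ℤ) - (s:ℤ) + 1) + g j
          = (s.choose j : ℝ) • (2 * X * Phi (2*(j:ℤ) - (s:ℤ))) := by
      intro j _
      rw [hg, ← smul_add, show (2*(j:ℤ) - (s:ℤ) - 1) = (2*(j:ℤ) - (s:ℤ)) - 1 by ring, cheb_rec]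
    rw [Finset.sum_congr rfl hterm]
    have : ∑ j ∈ Finset.range (s+1), (s.choose j : ℝ) • (2 * X * Phi (2*(j:ℤ) - (s:ℤ)))
        = 2 * X * ∑ j ∈ Finset.range (s+1), (s.choose j : ℝ) • Phi (2*(j:ℤ) - (s:ℤ)) := by
      rw [Finset.mul_sum]
      exact Finset.sum_congr rfl fun j _ => (mul_smul_comm _ _ _).symm
    rw [this, ih, pow_succ]
    ring

/-- For even s ≥ 2, 0 ≤ r ≤ s, and |x| ≥ 1: 0 ≤ G_{r,s}(x) ≤ min(|x|^s, (2|x|)^r). -/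
theorem G_bound_large (r s : ℕ) (hs2 : 2 ≤ s) (hse : Even s) (hrs : r ≤ s)
    (x : ℝ) (hx : 1 ≤ |x|) :
    0 ≤ (G r s).eval x ∧ (G r s).eval x ≤ min (|x| ^ s) ((2 * |x|) ^ r) := by
  obtain ⟨m, hm⟩ := hse
  set y : ℝ := 2 * x^2 - 1 with hy_def
  have hx2 : 1 ≤ x^2 := by nlinarith [sq_abs x]
  have hy : 1 ≤ y := by simp only [hy_def]; nlinarith
  set n : ℕ → ℕ := fun j => ((j:ℤ) - m).natAbs with hn
  have hphi : ∀ j : ℕ, (Phi (2*(j:ℤ) - (s:ℤ))).eval x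
      = (Polynomial.Chebyshev.T ℝ ((n j : ℕ) : ℤ)).eval y := by
    intro j
    have h2 : (2:ℤ)*(j:ℤ) - (s:ℤ) = ((j:ℤ) - m) * 2 := by rw [hm]; push_cast; ring
    rw [Phi, h2, Polynomial.Chebyshev.T_mul, Polynomial.eval_comp]
    have hT2 : (Polynomial.Chebyshev.T ℝ 2).eval x = y := by
      rw [Polynomial.Chebyshev.T_two]; simp [hy_def]
    rw [hT2, hn]
    rcases Int.natAbs_eq ((j:ℤ) - m) with h | h
    · rw [← h]
    · conv_lhs => rw [h, Polynomial.Chebyshev.T_neg]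
  have habs : ∀ j : ℕ, (2*(j:ℤ) - (s:ℤ)).natAbs = 2 * n j := by
    intro j
    have h2 : (2:ℤ)*(j:ℤ) - (s:ℤ) = 2 * ((j:ℤ) - m) := by rw [hm]; push_cast; ring
    rw [h2, Int.natAbs_mul, hn]; rfl
  -- per-term bounds
  have hterm_ge : ∀ j : ℕ, 1 ≤ (Phi (2*(j:ℤ) - (s:ℤ))).eval x := by
    intro j; rw [hphi j]; exact (cheb_mono y hy (n j)).1
  have hterm_le : ∀ j : ℕ, |2*(j:ℤ) - (s:ℤ)| ≤ (r:ℤ) →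
      (Phi (2*(j:ℤ) - (s:ℤ))).eval x ≤ (2*|x|)^r := by
    intro j hj
    rw [hphi j]
    have h1 : (Polynomial.Chebyshev.T ℝ ((n j : ℕ):ℤ)).eval y ≤ (2*y)^(n j) := cheb_le y hy (n j)
    have h2 : (2*y)^(n j) ≤ ((2*|x|)^2)^(n j) := by
      apply pow_le_pow_left₀ (by linarith)
      have : (2*|x|)^2 = 4 * x^2 := by rw [mul_pow, sq_abs]; ring
      rw [this, hy_def]; linarith
    have h3 : ((2*|x|)^2)^(n j) = (2*|x|)^(2 * n j) := by rw [← pow_mul]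
    have h4 : 2 * n j ≤ r := by
      have := Int.abs_eq_natAbs (2*(j:ℤ) - (s:ℤ))
      rw [this, habs j] at hj
      exact_mod_cast hj
    have h5 : (2*|x|)^(2 * n j) ≤ (2*|x|)^r := by
      apply pow_le_pow_right₀ (by linarith) h4
    linarith
  -- eval of G
  have hGeval : (G r s).eval x = ((2:ℝ)^s)⁻¹ * ∑ j ∈ Finset.range (s+1),
      (s.choose j : ℝ) * (if |2*(j:ℤ) - (s:ℤ)| ≤ (r:ℤ) then (Phi (2*(j:ℤ) - (s:ℤ))).eval x else 0) := by
    simp only [G, Polynomial.eval_smul, Polynomial.eval_finset_sum, smul_eq_mul]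
    congr 1
    apply Finset.sum_congr rfl
    intro j _
    rw [apply_ite (Polynomial.eval x), Polynomial.eval_zero]
  have hsum_eval : ∑ j ∈ Finset.range (s+1), (s.choose j : ℝ) * (Phi (2*(j:ℤ) - (s:ℤ))).eval x
      = (2*x)^s := by
    have := congrArg (Polynomial.eval x) (sum_phi s)
    simpa [Polynomial.eval_finset_sum, smul_eq_mul] using this
  have h2s : (0:ℝ) < 2^s := by positivity
  constructor
  · rw [hGeval]
    apply mul_nonneg (by positivity)
    apply Finset.sum_nonneg
    intro j _
    apply mul_nonneg (by positivity)
    split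
    · linarith [hterm_ge j]
    · exact le_refl _
  · rw [hGeval]
    apply le_min
    · -- bound by |x|^s
      have hle : ∑ j ∈ Finset.range (s+1),
          (s.choose j : ℝ) * (if |2*(j:ℤ) - (s:ℤ)| ≤ (r:ℤ) then (Phi (2*(j:ℤ) - (s:ℤ))).eval x else 0)
          ≤ ∑ j ∈ Finset.range (s+1), (s.choose j : ℝ) * (Phi (2*(j:ℤ) - (s:ℤ))).eval x := by
        apply Finset.sum_le_sum
        intro j _
        apply mul_le_mul_of_nonneg_left _ (by positivity)
        split
        · exact le_refl _
        · linarith [hterm_ge j]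
      rw [hsum_eval] at hle
      have hxs : ((2:ℝ)^s)⁻¹ * (2*x)^s = |x|^s := by
        rw [mul_pow, ← mul_assoc, inv_mul_cancel₀ (ne_of_gt h2s), one_mul]
        exact (Even.pow_abs ⟨m, hm⟩ x).symm
      calc ((2:ℝ)^s)⁻¹ * _ ≤ ((2:ℝ)^s)⁻¹ * (2*x)^s := by
            apply mul_le_mul_of_nonneg_left hle (by positivity)
        _ = |x|^s := hxs
    · -- bound by (2|x|)^r
      have hle : ∑ j ∈ Finset.range (s+1),
          (s.choose j : ℝ) * (if |2*(j:ℤ) - (s:ℤ)| ≤ (r:ℤ) then (Phi (2*(j:ℤ) - (s:ℤ))).eval x else 0)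
          ≤ ∑ j ∈ Finset.range (s+1), (s.choose j : ℝ) * (2*|x|)^r := by
        apply Finset.sum_le_sum
        intro j _
        apply mul_le_mul_of_nonneg_left _ (by positivity)
        split
        · next h => exact hterm_le j h
        · positivity
      have hchoose : ∑ j ∈ Finset.range (s+1), (s.choose j : ℝ) * (2*|x|)^r
          = 2^s * (2*|x|)^r := by
        rw [← Finset.sum_mul]
        congr 1
        rw [← Nat.cast_sum, Nat.sum_range_choose]
        push_cast; ring
      rw [hchoose] at hle
      calc ((2:ℝ)^s)⁻¹ * _ ≤ ((2:ℝ)^s)⁻¹ * (2^s * (2*|x|)^r) := by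
            apply mul_le_mul_of_nonneg_left hle (by positivity)
        _ = (2*|x|)^r := by rw [← mul_assoc, inv_mul_cancel₀ (ne_of_gt h2s), one_mul]
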